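/- For every coefficient tensor 𝒜 of a decoupled matrix chaos of order q, one has r(𝒜) ≤ σ(𝒜) and r(𝒜) ≤ v(𝒜). -/

import Mathlib

open MeasureTheory ProbabilityTheory Finset
open scoped ENNReal

noncomputable section

/-- Spectral (ℓ²→ℓ²) operator norm of a real matrix. -/
def specNorm {α β : Type*} [Fintype α] [Fintype β] [DecidableEq β] (M : Matrix α β ℝ) : ℝ :=
  ‖LinearMap.toContinuousLinearMap (Matrix.toEuclideanLin M)‖

/-- Size of the range of coordinate `t` of the coefficient tensor of a matrix chaos of
order `q`: the first `q` coordinates range over `[m]`, coordinate `q+1` over `[d₁]`,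
and coordinate `q+2` over `[d₂]`. -/
def cdim (q m d1 d2 : ℕ) (t : Fin (q + 2)) : ℕ :=
  if (t : ℕ) < q then m else if (t : ℕ) = q then d1 else d2

lemma cdim_lt {q m d1 d2 : ℕ} {t : Fin (q + 2)} (h : (t : ℕ) < q) : cdim q m d1 d2 t = m := by
  simp [cdim, h]

lemma cdim_row (q m d1 d2 : ℕ) : cdim q m d1 d2 ⟨q, by omega⟩ = d1 := by
  simp [cdim]

lemma cdim_col (q m d1 d2 : ℕ) : cdim q m d1 d2 ⟨q + 1, by omega⟩ = d2 := by
  show (if q + 1 < q then m else if q + 1 = q then d1 else d2) = d2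
  rw [if_neg (by omega), if_neg (by omega)]

/-- The coefficient tensor of order `q+2` associated to the matrix coefficients
`A : [m]^q → ℝ^{d₁×d₂}` of a matrix chaos. -/
def coeffTensor {q m d1 d2 : ℕ} (A : (Fin q → Fin m) → Matrix (Fin d1) (Fin d2) ℝ)
    (i : ∀ t : Fin (q + 2), Fin (cdim q m d1 d2 t)) : ℝ :=
  A (fun s => Fin.cast (cdim_lt (by simp)) (i (Fin.castLE (by omega) s)))
    (Fin.cast (cdim_row q m d1 d2) (i ⟨q, by omega⟩))
    (Fin.cast (cdim_col q m d1 d2) (i ⟨q + 1, by omega⟩))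

/-- The flattening `𝒜^{R→C}` of a tensor `𝒜` with coordinate index types `κ t`:
the matrix whose rows are indexed by tuples on `R`, columns by tuples on `C`, with entry
`(r, c)` equal to the sum of the entries of `𝒜` over all full index tuples restricting
to `r` on `R` and to `c` on `C`. -/
def flattenG {n : ℕ} (κ : Fin n → Type) [∀ t, Fintype (κ t)] [∀ t, DecidableEq (κ t)]
    (𝒜 : (∀ t, κ t) → ℝ) (R C : Finset (Fin n)) :
    Matrix (∀ t : {x // x ∈ R}, κ t.1) (∀ t : {x // x ∈ C}, κ t.1) ℝ :=
  Matrix.of fun r c => ∑ i : ∀ t, κ t,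
    if (∀ t : {x // x ∈ R}, i t.1 = r t) ∧ (∀ t : {x // x ∈ C}, i t.1 = c t) then 𝒜 i else 0

/-- The parameter `σ(𝒜)`: the largest spectral norm of a σ-flattening, i.e. a flattening
along a partition `R ⊔ C = [k+2]` keeping the row matrix coordinate `k+1` in `R` and the
column matrix coordinate `k+2` in `C`. -/
def sigmaP {k : ℕ} (κ : Fin (k + 2) → Type) [∀ t, Fintype (κ t)] [∀ t, DecidableEq (κ t)]
    (𝒜 : (∀ t, κ t) → ℝ) : ℝ :=
  sSup {x : ℝ | ∃ R C : Finset (Fin (k + 2)), Disjoint R C ∧ R ∪ C = Finset.univ ∧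
    (⟨k, by omega⟩ : Fin (k + 2)) ∈ R ∧ (⟨k + 1, by omega⟩ : Fin (k + 2)) ∈ C ∧
    x = specNorm (flattenG κ 𝒜 R C)}

/-- The parameter `v(𝒜)`: the largest spectral norm of a v-flattening, i.e. a flattening
along a partition `R ⊔ C = [k+2]` with both matrix coordinates in `C` and `R ≠ ∅`. -/
def vP {k : ℕ} (κ : Fin (k + 2) → Type) [∀ t, Fintype (κ t)] [∀ t, DecidableEq (κ t)]
    (𝒜 : (∀ t, κ t) → ℝ) : ℝ :=
  sSup {x : ℝ | ∃ R C : Finset (Fin (k + 2)), Disjoint R C ∧ R ∪ C = Finset.univ ∧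
    (⟨k, by omega⟩ : Fin (k + 2)) ∈ C ∧ (⟨k + 1, by omega⟩ : Fin (k + 2)) ∈ C ∧
    R.Nonempty ∧ x = specNorm (flattenG κ 𝒜 R C)}

/-- The parameter `r(𝒜)`: the largest spectral norm of an r-flattening, i.e. a flattening
with `R ∪ C = [k+2]`, `k+1 ∈ R`, `k+2 ∈ C` and `∅ ≠ R ∩ C ⊆ [k]`. -/
def rP {k : ℕ} (κ : Fin (k + 2) → Type) [∀ t, Fintype (κ t)] [∀ t, DecidableEq (κ t)]
    (𝒜 : (∀ t, κ t) → ℝ) : ℝ :=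
  sSup {x : ℝ | ∃ R C : Finset (Fin (k + 2)), R ∪ C = Finset.univ ∧
    (⟨k, by omega⟩ : Fin (k + 2)) ∈ R ∧ (⟨k + 1, by omega⟩ : Fin (k + 2)) ∈ C ∧
    (R ∩ C).Nonempty ∧ (∀ t ∈ R ∩ C, (t : ℕ) < k) ∧
    x = specNorm (flattenG κ 𝒜 R C)}

lemma specNorm_nonneg {α β : Type*} [Fintype α] [Fintype β] [DecidableEq β]
    (M : Matrix α β ℝ) : 0 ≤ specNorm M := norm_nonneg _


lemma sq_sum_mulVec_le {α β : Type*} [Fintype α] [Fintype β] [DecidableEq β]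
    (M : Matrix α β ℝ) (v : β → ℝ) :
    ∑ r, (M.mulVec v r) ^ 2 ≤ specNorm M ^ 2 * ∑ c, (v c) ^ 2 := by
  have h := (LinearMap.toContinuousLinearMap (Matrix.toEuclideanLin M)).le_opNorm
    ((WithLp.equiv 2 (β → ℝ)).symm v)
  have h1 : ‖LinearMap.toContinuousLinearMap (Matrix.toEuclideanLin M)
      ((WithLp.equiv 2 (β → ℝ)).symm v)‖ = Real.sqrt (∑ r, (M.mulVec v r) ^ 2) := by
    rw [show (LinearMap.toContinuousLinearMap (Matrix.toEuclideanLin M))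
        ((WithLp.equiv 2 (β → ℝ)).symm v) = (WithLp.equiv 2 (α → ℝ)).symm (M.mulVec v) from rfl]
    rw [EuclideanSpace.norm_eq]
    congr 1
    refine Finset.sum_congr rfl fun r _ => ?_
    rw [Real.norm_eq_abs, sq_abs]; rfl
  have h2 : ‖(WithLp.equiv 2 (β → ℝ)).symm v‖ = Real.sqrt (∑ c, (v c) ^ 2) := by
    rw [EuclideanSpace.norm_eq]
    congr 1
    refine Finset.sum_congr rfl fun c _ => ?_
    rw [Real.norm_eq_abs, sq_abs]; rfl
  rw [h1, h2] at h
  have h3 : Real.sqrt (∑ r, (M.mulVec v r) ^ 2) ^ 2 ≤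
      (specNorm M * Real.sqrt (∑ c, (v c) ^ 2)) ^ 2 := by
    apply pow_le_pow_left₀ (Real.sqrt_nonneg _) h
  rw [Real.sq_sqrt (by positivity), mul_pow, Real.sq_sqrt (by positivity)] at h3
  exact h3


lemma specNorm_le_bound {α β : Type*} [Fintype α] [Fintype β] [DecidableEq β]
    (M : Matrix α β ℝ) (K : ℝ) (hK : 0 ≤ K)
    (h : ∀ v : β → ℝ, ∑ r, (M.mulVec v r) ^ 2 ≤ K ^ 2 * ∑ c, (v c) ^ 2) :
    specNorm M ≤ K := by
  apply ContinuousLinearMap.opNorm_le_bound _ hK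
  intro x
  set v : β → ℝ := WithLp.equiv 2 (β → ℝ) x with hv
  have h1 : ‖(LinearMap.toContinuousLinearMap (Matrix.toEuclideanLin M)) x‖
      = Real.sqrt (∑ r, (M.mulVec v r) ^ 2) := by
    rw [show (LinearMap.toContinuousLinearMap (Matrix.toEuclideanLin M)) x
        = (WithLp.equiv 2 (α → ℝ)).symm (M.mulVec v) from rfl]
    rw [EuclideanSpace.norm_eq]
    congr 1
    exact Finset.sum_congr rfl fun r _ => by rw [Real.norm_eq_abs, sq_abs]; rfl
  have h2 : ‖x‖ = Real.sqrt (∑ c, (v c) ^ 2) := by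
    rw [EuclideanSpace.norm_eq]
    congr 1
    exact Finset.sum_congr rfl fun c _ => by rw [Real.norm_eq_abs, sq_abs]; rfl
  rw [h1, h2]
  rw [show K * Real.sqrt (∑ c, (v c)^2) = Real.sqrt (K^2 * ∑ c, (v c)^2) by
    rw [Real.sqrt_mul (by positivity), Real.sqrt_sq hK]]
  exact Real.sqrt_le_sqrt (h v)

lemma specNorm_le_of_partition {α β σ : Type*} [Fintype α] [Fintype β] [Fintype σ]
    [DecidableEq β] [DecidableEq σ]
    (M : Matrix α β ℝ) (f : α → σ) (g : β → σ) (K : ℝ) (hK : 0 ≤ K)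
    (hzero : ∀ r c, f r ≠ g c → M r c = 0)
    (h : ∀ (v : β → ℝ) (s : σ),
      (∑ r ∈ Finset.univ.filter (fun r => f r = s),
        (∑ c ∈ Finset.univ.filter (fun c => g c = s), M r c * v c) ^ 2)
      ≤ K ^ 2 * ∑ c ∈ Finset.univ.filter (fun c => g c = s), (v c) ^ 2) :
    specNorm M ≤ K := by
  apply specNorm_le_bound _ _ hK
  intro v
  have e1 : ∀ r : α, M.mulVec v r
      = ∑ c ∈ Finset.univ.filter (fun c => g c = f r), M r c * v c := by
    intro r
    rw [Matrix.mulVec, dotProduct]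
    rw [← Finset.sum_filter_add_sum_filter_not Finset.univ (fun c => g c = f r)]
    have : ∑ c ∈ Finset.univ.filter (fun c => ¬ g c = f r), M r c * v c = 0 := by
      apply Finset.sum_eq_zero
      intro c hc
      rw [hzero r c (fun hh => (Finset.mem_filter.mp hc).2 hh.symm)]
      ring
    rw [this, add_zero]
  calc ∑ r, (M.mulVec v r) ^ 2
      = ∑ s, ∑ r ∈ Finset.univ.filter (fun r => f r = s), (M.mulVec v r) ^ 2 :=
        (Finset.sum_fiberwise Finset.univ f _).symm
    _ ≤ ∑ s, K ^ 2 * ∑ c ∈ Finset.univ.filter (fun c => g c = s), (v c) ^ 2 := by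
        apply Finset.sum_le_sum
        intro s _
        refine le_trans (le_of_eq ?_) (h v s)
        apply Finset.sum_congr rfl
        intro r hr
        rw [e1 r, (Finset.mem_filter.mp hr).2]
    _ = K ^ 2 * ∑ c, (v c) ^ 2 := by
        rw [← Finset.mul_sum]
        congr 1
        exact Finset.sum_fiberwise Finset.univ g _

lemma sum_row_sq_le {α β : Type*} [Fintype α] [Fintype β] [DecidableEq β]
    (M : Matrix α β ℝ) (r : α) :
    ∑ c, (M r c) ^ 2 ≤ specNorm M ^ 2 := by
  set L := ∑ c, (M r c) ^ 2 with hL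
  have hL0 : 0 ≤ L := Finset.sum_nonneg fun c _ => sq_nonneg _
  set w : β → ℝ := fun c => M r c with hw
  have h0 : M.mulVec w r = L := by
    rw [Matrix.mulVec, dotProduct, hL]
    exact Finset.sum_congr rfl fun c _ => (pow_two _).symm
  have h1 : L ^ 2 ≤ ∑ ρ, (M.mulVec w ρ) ^ 2 := by
    rw [← h0]
    exact Finset.single_le_sum (f := fun ρ => (M.mulVec w ρ) ^ 2)
      (fun _ _ => sq_nonneg _) (Finset.mem_univ r)
  have h2 : ∑ ρ, (M.mulVec w ρ) ^ 2 ≤ specNorm M ^ 2 * L := by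
    have := sq_sum_mulVec_le M w
    have he : ∑ c, (w c) ^ 2 = L := rfl
    rwa [he] at this
  have h3 : L * L ≤ specNorm M ^ 2 * L := by
    rw [← pow_two]
    exact h1.trans h2
  rcases eq_or_lt_of_le hL0 with h | h
  · rw [← h]; positivity
  · exact le_of_mul_le_mul_right h3 h


section Glue
variable {n : ℕ} {κ : Fin n → Type} [∀ t, Fintype (κ t)] [∀ t, DecidableEq (κ t)]

def glue (R C : Finset (Fin n)) (hu : R ∪ C = Finset.univ)
    (r : ∀ t : {x // x ∈ R}, κ t.1) (c : ∀ t : {x // x ∈ C}, κ t.1) : ∀ t, κ t :=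
  fun t => if h : t ∈ R then r ⟨t, h⟩ else
    c ⟨t, by
      have ht : t ∈ R ∪ C := hu ▸ Finset.mem_univ t
      exact (Finset.mem_union.mp ht).resolve_left h⟩

omit [∀ t, Fintype (κ t)] [∀ t, DecidableEq (κ t)] in
lemma glue_mem_R {R C : Finset (Fin n)} (hu : R ∪ C = Finset.univ)
    (r : ∀ t : {x // x ∈ R}, κ t.1) (c : ∀ t : {x // x ∈ C}, κ t.1)
    {t : Fin n} (h : t ∈ R) : glue R C hu r c t = r ⟨t, h⟩ := dif_pos h

omit [∀ t, Fintype (κ t)] [∀ t, DecidableEq (κ t)] in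
lemma glue_mem_C {R C : Finset (Fin n)} (hu : R ∪ C = Finset.univ)
    (r : ∀ t : {x // x ∈ R}, κ t.1) (c : ∀ t : {x // x ∈ C}, κ t.1)
    {t : Fin n} (hC : t ∈ C)
    (hagree : ∀ (t : Fin n) (h1 : t ∈ R) (h2 : t ∈ C), r ⟨t, h1⟩ = c ⟨t, h2⟩) :
    glue R C hu r c t = c ⟨t, hC⟩ := by
  unfold glue
  split
  · next h => exact hagree t h hC
  · rfl

lemma flattenG_apply_glue (𝒜 : (∀ t, κ t) → ℝ) {R C : Finset (Fin n)}
    (hu : R ∪ C = Finset.univ)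
    (r : ∀ t : {x // x ∈ R}, κ t.1) (c : ∀ t : {x // x ∈ C}, κ t.1)
    (hagree : ∀ (t : Fin n) (h1 : t ∈ R) (h2 : t ∈ C), r ⟨t, h1⟩ = c ⟨t, h2⟩) :
    flattenG κ 𝒜 R C r c = 𝒜 (glue R C hu r c) := by
  show (∑ i : ∀ t, κ t,
    if (∀ t : {x // x ∈ R}, i t.1 = r t) ∧ (∀ t : {x // x ∈ C}, i t.1 = c t) then 𝒜 i else 0)
    = 𝒜 (glue R C hu r c)
  have key : ∀ i : ∀ t, κ t,
      ((∀ t : {x // x ∈ R}, i t.1 = r t) ∧ (∀ t : {x // x ∈ C}, i t.1 = c t))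
      ↔ i = glue R C hu r c := by
    intro i
    constructor
    · rintro ⟨h1, h2⟩
      funext t
      by_cases h : t ∈ R
      · rw [glue_mem_R hu r c h]; exact h1 ⟨t, h⟩
      · have ht : t ∈ R ∪ C := hu ▸ Finset.mem_univ t
        have hC : t ∈ C := (Finset.mem_union.mp ht).resolve_left h
        rw [glue_mem_C hu r c hC hagree]; exact h2 ⟨t, hC⟩
    · rintro rfl
      exact ⟨fun t => glue_mem_R hu r c t.2, fun t => glue_mem_C hu r c t.2 hagree⟩
  rw [Finset.sum_congr rfl fun i _ => by rw [if_congr (key i) rfl rfl]]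
  rw [Finset.sum_ite_eq' Finset.univ (glue R C hu r c) 𝒜]
  simp

lemma flattenG_apply_ne (𝒜 : (∀ t, κ t) → ℝ) {R C : Finset (Fin n)}
    (r : ∀ t : {x // x ∈ R}, κ t.1) (c : ∀ t : {x // x ∈ C}, κ t.1)
    {t : Fin n} (h1 : t ∈ R) (h2 : t ∈ C) (hne : r ⟨t, h1⟩ ≠ c ⟨t, h2⟩) :
    flattenG κ 𝒜 R C r c = 0 := by
  show (∑ i : ∀ t, κ t,
    if (∀ t : {x // x ∈ R}, i t.1 = r t) ∧ (∀ t : {x // x ∈ C}, i t.1 = c t) then 𝒜 i else 0)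
    = 0
  apply Finset.sum_eq_zero
  intro i _
  rw [if_neg]
  rintro ⟨hR, hC⟩
  exact hne ((hR ⟨t, h1⟩).symm.trans (hC ⟨t, h2⟩))

lemma key_sigma (𝒜 : (∀ t, κ t) → ℝ) {R C : Finset (Fin n)} (hu : R ∪ C = Finset.univ) :
    specNorm (flattenG κ 𝒜 R C) ≤ specNorm (flattenG κ 𝒜 R (C \ R)) := by
  set M := flattenG κ 𝒜 R C with hM
  set M' := flattenG κ 𝒜 R (C \ R) with hM'
  have hu' : R ∪ (C \ R) = Finset.univ := by
    rw [Finset.union_sdiff_self_eq_union]; exact hu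
  set S : Finset (Fin n) := R ∩ C with hS
  let f : (∀ t : {x // x ∈ R}, κ t.1) → (∀ t : {x // x ∈ S}, κ t.1) :=
    fun r t => r ⟨t.1, Finset.mem_of_mem_inter_left t.2⟩
  let g : (∀ t : {x // x ∈ C}, κ t.1) → (∀ t : {x // x ∈ S}, κ t.1) :=
    fun c t => c ⟨t.1, Finset.mem_of_mem_inter_right t.2⟩
  apply specNorm_le_of_partition M f g _ (specNorm_nonneg M')
  · intro r c hne
    have : ∃ t : {x // x ∈ S}, f r t ≠ g c t := by
      by_contra hcon
      push_neg at hcon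
      exact hne (funext hcon)
    obtain ⟨t, ht⟩ := this
    exact flattenG_apply_ne 𝒜 r c (Finset.mem_of_mem_inter_left t.2)
      (Finset.mem_of_mem_inter_right t.2) ht
  · intro v s
    -- combine
    let combine : (∀ t : {x // x ∈ C \ R}, κ t.1) → (∀ t : {x // x ∈ C}, κ t.1) :=
      fun c' t => if h : t.1 ∈ R then s ⟨t.1, Finset.mem_inter.mpr ⟨h, t.2⟩⟩
        else c' ⟨t.1, Finset.mem_sdiff.mpr ⟨t.2, h⟩⟩
    have bij : ∀ F : (∀ t : {x // x ∈ C}, κ t.1) → ℝ,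
        ∑ c ∈ Finset.univ.filter (fun c => g c = s), F c
        = ∑ c' : (∀ t : {x // x ∈ C \ R}, κ t.1), F (combine c') := by
      intro F
      have hleft : ∀ c : (∀ t : {x // x ∈ C}, κ t.1), g c = s →
          combine (fun t => c ⟨t.1, (Finset.mem_sdiff.mp t.2).1⟩) = c := by
        intro c hgc
        funext t
        by_cases h : t.1 ∈ R
        · simp only [combine, dif_pos h]
          rw [← hgc]
        · simp only [combine, dif_neg h]
      apply Finset.sum_nbij' (fun c => fun t : {x // x ∈ C \ R} =>
          c ⟨t.1, (Finset.mem_sdiff.mp t.2).1⟩) combine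
      · intro c _; exact Finset.mem_univ _
      · intro c' _
        rw [Finset.mem_filter]
        refine ⟨Finset.mem_univ _, ?_⟩
        funext t
        have hR : t.1 ∈ R := Finset.mem_of_mem_inter_left t.2
        show combine c' ⟨t.1, Finset.mem_of_mem_inter_right t.2⟩ = s t
        simp only [combine, dif_pos hR]
      · intro c hc
        exact hleft c (Finset.mem_filter.mp hc).2
      · intro c' _
        funext t
        have h : ¬ t.1 ∈ R := (Finset.mem_sdiff.mp t.2).2
        show combine c' ⟨t.1, (Finset.mem_sdiff.mp t.2).1⟩ = c' t
        simp only [combine, dif_neg h]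
      · intro c hc
        exact (congrArg F (hleft c (Finset.mem_filter.mp hc).2)).symm
    have entry : ∀ (r : ∀ t : {x // x ∈ R}, κ t.1), f r = s →
        ∀ c' : (∀ t : {x // x ∈ C \ R}, κ t.1), M r (combine c') = M' r c' := by
      intro r hfr c'
      have hagree1 : ∀ (t : Fin n) (h1 : t ∈ R) (h2 : t ∈ C),
          r ⟨t, h1⟩ = combine c' ⟨t, h2⟩ := by
        intro t h1 h2
        show r ⟨t, h1⟩ = combine c' ⟨t, h2⟩
        simp only [combine, dif_pos h1]
        rw [← hfr]
      have hagree2 : ∀ (t : Fin n) (h1 : t ∈ R) (h2 : t ∈ C \ R),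
          r ⟨t, h1⟩ = c' ⟨t, h2⟩ := by
        intro t h1 h2
        exact absurd h1 (Finset.mem_sdiff.mp h2).2
      rw [hM, flattenG_apply_glue 𝒜 hu r (combine c') hagree1,
        hM', flattenG_apply_glue 𝒜 hu' r c' hagree2]
      congr 1
      funext t
      by_cases h : t ∈ R
      · rw [glue_mem_R hu r _ h, glue_mem_R hu' r _ h]
      · have ht : t ∈ R ∪ C := hu ▸ Finset.mem_univ t
        have hC : t ∈ C := (Finset.mem_union.mp ht).resolve_left h
        have hC' : t ∈ C \ R := Finset.mem_sdiff.mpr ⟨hC, h⟩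
        rw [glue_mem_C hu r _ hC hagree1, glue_mem_C hu' r _ hC' hagree2]
        simp only [combine, dif_neg h]
    let V : (∀ t : {x // x ∈ C \ R}, κ t.1) → ℝ := fun c' => v (combine c')
    have inner_eq : ∀ r ∈ Finset.univ.filter (fun r => f r = s),
        ∑ c ∈ Finset.univ.filter (fun c => g c = s), M r c * v c = M'.mulVec V r := by
      intro r hr
      have hfr : f r = s := (Finset.mem_filter.mp hr).2
      rw [bij (fun c => M r c * v c)]
      rw [Matrix.mulVec, dotProduct]
      apply Finset.sum_congr rfl
      intro c' _
      rw [entry r hfr c']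
    calc ∑ r ∈ Finset.univ.filter (fun r => f r = s),
          (∑ c ∈ Finset.univ.filter (fun c => g c = s), M r c * v c) ^ 2
        = ∑ r ∈ Finset.univ.filter (fun r => f r = s), (M'.mulVec V r) ^ 2 := by
          apply Finset.sum_congr rfl
          intro r hr
          rw [inner_eq r hr]
      _ ≤ ∑ r, (M'.mulVec V r) ^ 2 := by
          apply Finset.sum_le_sum_of_subset_of_nonneg (Finset.filter_subset _ _)
          intro r _ _
          positivity
      _ ≤ specNorm M' ^ 2 * ∑ c', (V c') ^ 2 := sq_sum_mulVec_le M' V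
      _ = specNorm M' ^ 2 * ∑ c ∈ Finset.univ.filter (fun c => g c = s), (v c) ^ 2 := by
          rw [bij (fun c => (v c) ^ 2)]

lemma key_v (𝒜 : (∀ t, κ t) → ℝ) {R C : Finset (Fin n)} (hu : R ∪ C = Finset.univ) :
    specNorm (flattenG κ 𝒜 R C) ≤ specNorm (flattenG κ 𝒜 (R ∩ C) (R ∩ C)ᶜ) := by
  set M := flattenG κ 𝒜 R C with hM
  set S : Finset (Fin n) := R ∩ C with hS
  set N := flattenG κ 𝒜 S Sᶜ with hN
  have hu2 : S ∪ Sᶜ = Finset.univ := Finset.union_compl S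
  let f : (∀ t : {x // x ∈ R}, κ t.1) → (∀ t : {x // x ∈ S}, κ t.1) :=
    fun r t => r ⟨t.1, Finset.mem_of_mem_inter_left t.2⟩
  let g : (∀ t : {x // x ∈ C}, κ t.1) → (∀ t : {x // x ∈ S}, κ t.1) :=
    fun c t => c ⟨t.1, Finset.mem_of_mem_inter_right t.2⟩
  have memC : ∀ t : Fin n, t ∉ R → t ∈ C := by
    intro t h
    have ht : t ∈ R ∪ C := hu ▸ Finset.mem_univ t
    exact (Finset.mem_union.mp ht).resolve_left h
  apply specNorm_le_of_partition M f g _ (specNorm_nonneg N)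
  · intro r c hne
    have : ∃ t : {x // x ∈ S}, f r t ≠ g c t := by
      by_contra hcon
      push_neg at hcon
      exact hne (funext hcon)
    obtain ⟨t, ht⟩ := this
    exact flattenG_apply_ne 𝒜 r c (Finset.mem_of_mem_inter_left t.2)
      (Finset.mem_of_mem_inter_right t.2) ht
  · intro v s
    have cs : ∀ r : (∀ t : {x // x ∈ R}, κ t.1),
        (∑ c ∈ Finset.univ.filter (fun c => g c = s), M r c * v c) ^ 2
        ≤ (∑ c ∈ Finset.univ.filter (fun c => g c = s), (M r c) ^ 2)
          * (∑ c ∈ Finset.univ.filter (fun c => g c = s), (v c) ^ 2) :=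
      fun r => Finset.sum_mul_sq_le_sq_mul_sq _ _ _
    have step1 : (∑ r ∈ Finset.univ.filter (fun r => f r = s),
        (∑ c ∈ Finset.univ.filter (fun c => g c = s), M r c * v c) ^ 2)
        ≤ (∑ r ∈ Finset.univ.filter (fun r => f r = s),
            ∑ c ∈ Finset.univ.filter (fun c => g c = s), (M r c) ^ 2)
          * (∑ c ∈ Finset.univ.filter (fun c => g c = s), (v c) ^ 2) := by
      rw [Finset.sum_mul]
      exact Finset.sum_le_sum fun r _ => cs r
    let iMap : ((∀ t : {x // x ∈ R}, κ t.1) × (∀ t : {x // x ∈ C}, κ t.1)) →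
        (∀ t : {x // x ∈ Sᶜ}, κ t.1) :=
      fun p t => if h : t.1 ∈ R then p.1 ⟨t.1, h⟩ else p.2 ⟨t.1, memC t.1 h⟩
    let jMap : (∀ t : {x // x ∈ Sᶜ}, κ t.1) →
        ((∀ t : {x // x ∈ R}, κ t.1) × (∀ t : {x // x ∈ C}, κ t.1)) :=
      fun c'' => (fun t => if h : t.1 ∈ S then s ⟨t.1, h⟩
          else c'' ⟨t.1, Finset.mem_compl.mpr h⟩,
        fun t => if h : t.1 ∈ S then s ⟨t.1, h⟩
          else c'' ⟨t.1, Finset.mem_compl.mpr h⟩)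
    have step2 : (∑ r ∈ Finset.univ.filter (fun r => f r = s),
            ∑ c ∈ Finset.univ.filter (fun c => g c = s), (M r c) ^ 2)
        = ∑ c'' : (∀ t : {x // x ∈ Sᶜ}, κ t.1), (N s c'') ^ 2 := by
      rw [← Finset.sum_product']
      apply Finset.sum_nbij' iMap jMap
      · intro p _; exact Finset.mem_univ _
      · intro c'' _
        rw [Finset.mem_product]
        constructor
        · rw [Finset.mem_filter]
          refine ⟨Finset.mem_univ _, ?_⟩
          funext t
          simp only [f, jMap]
          rw [dif_pos t.2]
        · rw [Finset.mem_filter]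
          refine ⟨Finset.mem_univ _, ?_⟩
          funext t
          simp only [g, jMap]
          rw [dif_pos t.2]
      · intro p hp
        rw [Finset.mem_product, Finset.mem_filter, Finset.mem_filter] at hp
        obtain ⟨⟨_, hf⟩, ⟨_, hg⟩⟩ := hp
        have e1 : ∀ (t : Fin n) (h : t ∈ S), s ⟨t, h⟩
            = p.1 ⟨t, Finset.mem_of_mem_inter_left h⟩ := by
          intro t h; rw [← hf]
        have e2 : ∀ (t : Fin n) (h : t ∈ S), s ⟨t, h⟩
            = p.2 ⟨t, Finset.mem_of_mem_inter_right h⟩ := by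
          intro t h; rw [← hg]
        refine Prod.ext ?_ ?_
        · funext t
          simp only [jMap, iMap]
          by_cases h : t.1 ∈ S
          · rw [dif_pos h, e1 t.1 h]
          · rw [dif_neg h, dif_pos t.2]
        · funext t
          simp only [jMap, iMap]
          by_cases h : t.1 ∈ S
          · rw [dif_pos h, e2 t.1 h]
          · have hR : t.1 ∉ R := fun hr => h (Finset.mem_inter.mpr ⟨hr, t.2⟩)
            rw [dif_neg h, dif_neg hR]
      · intro c'' _
        funext t
        have htS : t.1 ∉ S := Finset.mem_compl.mp t.2
        simp only [iMap, jMap]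
        by_cases h : t.1 ∈ R
        · rw [dif_pos h, dif_neg htS]
        · rw [dif_neg h, dif_neg htS]
      · intro p hp
        rw [Finset.mem_product, Finset.mem_filter, Finset.mem_filter] at hp
        obtain ⟨⟨_, hf⟩, ⟨_, hg⟩⟩ := hp
        congr 1
        have hagreeM : ∀ (t : Fin n) (h1 : t ∈ R) (h2 : t ∈ C),
            p.1 ⟨t, h1⟩ = p.2 ⟨t, h2⟩ := by
          intro t h1 h2
          have hts : t ∈ S := Finset.mem_inter.mpr ⟨h1, h2⟩
          have e1 : p.1 ⟨t, h1⟩ = s ⟨t, hts⟩ := by rw [← hf]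
          have e2 : p.2 ⟨t, h2⟩ = s ⟨t, hts⟩ := by rw [← hg]
          rw [e1, e2]
        have hagreeN : ∀ (t : Fin n) (h1 : t ∈ S) (h2 : t ∈ Sᶜ),
            s ⟨t, h1⟩ = iMap p ⟨t, h2⟩ := by
          intro t h1 h2
          exact absurd h1 (Finset.mem_compl.mp h2)
        rw [hM, flattenG_apply_glue 𝒜 hu p.1 p.2 hagreeM,
          hN, flattenG_apply_glue 𝒜 hu2 s _ hagreeN]
        congr 1
        funext t
        by_cases hR : t ∈ R
        · rw [glue_mem_R hu p.1 p.2 hR]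
          by_cases htS : t ∈ S
          · rw [glue_mem_R hu2 s _ htS]
            rw [← hf]
          · rw [glue_mem_C hu2 s _ (Finset.mem_compl.mpr htS) hagreeN]
            simp only [iMap]
            rw [dif_pos hR]
        · have hC : t ∈ C := memC t hR
          have htS : t ∉ S := fun h => hR (Finset.mem_of_mem_inter_left h)
          rw [glue_mem_C hu p.1 p.2 hC hagreeM]
          rw [glue_mem_C hu2 s _ (Finset.mem_compl.mpr htS) hagreeN]
          simp only [iMap]
          rw [dif_neg hR]
    have step3 : ∑ c'' : (∀ t : {x // x ∈ Sᶜ}, κ t.1), (N s c'') ^ 2 ≤ specNorm N ^ 2 :=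
      sum_row_sq_le N s
    calc (∑ r ∈ Finset.univ.filter (fun r => f r = s),
        (∑ c ∈ Finset.univ.filter (fun c => g c = s), M r c * v c) ^ 2)
        ≤ (∑ c'' : (∀ t : {x // x ∈ Sᶜ}, κ t.1), (N s c'') ^ 2)
          * (∑ c ∈ Finset.univ.filter (fun c => g c = s), (v c) ^ 2) := by
          rw [← step2]; exact step1
      _ ≤ specNorm N ^ 2 * ∑ c ∈ Finset.univ.filter (fun c => g c = s), (v c) ^ 2 := by
          apply mul_le_mul_of_nonneg_right step3
          exact Finset.sum_nonneg fun c _ => sq_nonneg _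

end Glue

/-- `r(𝒜) ≤ σ(𝒜)` and `r(𝒜) ≤ v(𝒜)`. -/

theorem r_le_sigma_and_v (q m d1 d2 : ℕ) (hq : 0 < q) (hm : 0 < m) (hd1 : 0 < d1)
    (hd2 : 0 < d2) (𝒜 : (∀ t : Fin (q + 2), Fin (cdim q m d1 d2 t)) → ℝ) :
    rP (fun t => Fin (cdim q m d1 d2 t)) 𝒜 ≤ sigmaP (fun t => Fin (cdim q m d1 d2 t)) 𝒜 ∧
    rP (fun t => Fin (cdim q m d1 d2 t)) 𝒜 ≤ vP (fun t => Fin (cdim q m d1 d2 t)) 𝒜 := by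
  set κ : Fin (q + 2) → Type := fun t => Fin (cdim q m d1 d2 t) with hκ
  have hbdd : ∀ s : Set ℝ, s ⊆ Set.range (fun p : Finset (Fin (q + 2)) × Finset (Fin (q + 2)) =>
      specNorm (flattenG κ 𝒜 p.1 p.2)) → BddAbove s :=
    fun s hs => ((Set.finite_range _).subset hs).bddAbove
  have hbddσ : BddAbove {x : ℝ | ∃ R C : Finset (Fin (q + 2)), Disjoint R C ∧
      R ∪ C = Finset.univ ∧ (⟨q, by omega⟩ : Fin (q + 2)) ∈ R ∧
      (⟨q + 1, by omega⟩ : Fin (q + 2)) ∈ C ∧ x = specNorm (flattenG κ 𝒜 R C)} := by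
    apply hbdd
    rintro x ⟨R, C, _, _, _, _, rfl⟩
    exact ⟨(R, C), rfl⟩
  have hbddv : BddAbove {x : ℝ | ∃ R C : Finset (Fin (q + 2)), Disjoint R C ∧
      R ∪ C = Finset.univ ∧ (⟨q, by omega⟩ : Fin (q + 2)) ∈ C ∧
      (⟨q + 1, by omega⟩ : Fin (q + 2)) ∈ C ∧ R.Nonempty ∧
      x = specNorm (flattenG κ 𝒜 R C)} := by
    apply hbdd
    rintro x ⟨R, C, _, _, _, _, _, rfl⟩
    exact ⟨(R, C), rfl⟩
  have hσ0 : 0 ≤ sigmaP κ 𝒜 := by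
    have hmem : specNorm (flattenG κ 𝒜 ({(⟨q + 1, by omega⟩ : Fin (q + 2))}ᶜ)
        {(⟨q + 1, by omega⟩ : Fin (q + 2))}) ∈ {x : ℝ | ∃ R C : Finset (Fin (q + 2)),
        Disjoint R C ∧ R ∪ C = Finset.univ ∧ (⟨q, by omega⟩ : Fin (q + 2)) ∈ R ∧
        (⟨q + 1, by omega⟩ : Fin (q + 2)) ∈ C ∧ x = specNorm (flattenG κ 𝒜 R C)} := by
      refine ⟨_, _, disjoint_compl_left, by rw [Finset.union_comm, Finset.union_compl], ?_, ?_, rfl⟩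
      · rw [Finset.mem_compl, Finset.mem_singleton]
        intro h
        have h' : q = q + 1 := congrArg Fin.val h
        omega
      · exact Finset.mem_singleton_self _
    exact le_trans (specNorm_nonneg _) (le_csSup hbddσ hmem)
  have hv0 : 0 ≤ vP κ 𝒜 := by
    have hmem : specNorm (flattenG κ 𝒜 {(⟨0, by omega⟩ : Fin (q + 2))}
        ({(⟨0, by omega⟩ : Fin (q + 2))}ᶜ)) ∈ {x : ℝ | ∃ R C : Finset (Fin (q + 2)),
        Disjoint R C ∧ R ∪ C = Finset.univ ∧ (⟨q, by omega⟩ : Fin (q + 2)) ∈ C ∧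
        (⟨q + 1, by omega⟩ : Fin (q + 2)) ∈ C ∧ R.Nonempty ∧
        x = specNorm (flattenG κ 𝒜 R C)} := by
      refine ⟨_, _, disjoint_compl_right, Finset.union_compl _, ?_, ?_,
        Finset.singleton_nonempty _, rfl⟩
      · rw [Finset.mem_compl, Finset.mem_singleton]
        intro h
        have h' : q = 0 := congrArg Fin.val h
        omega
      · rw [Finset.mem_compl, Finset.mem_singleton]
        intro h
        have h' : q + 1 = 0 := congrArg Fin.val h
        omega
    exact le_trans (specNorm_nonneg _) (le_csSup hbddv hmem)
  constructor
  · apply Real.sSup_le _ hσ0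
    rintro x ⟨R, C, hu, hR, hC, hne, hlt, rfl⟩
    refine le_trans (key_sigma 𝒜 hu) (le_csSup hbddσ ?_)
    refine ⟨R, C \ R, Finset.disjoint_sdiff, ?_, hR, ?_, rfl⟩
    · rw [Finset.union_sdiff_self_eq_union]; exact hu
    · rw [Finset.mem_sdiff]
      refine ⟨hC, fun h => ?_⟩
      have := hlt _ (Finset.mem_inter.mpr ⟨h, hC⟩)
      simp at this
  · apply Real.sSup_le _ hv0
    rintro x ⟨R, C, hu, hR, hC, hne, hlt, rfl⟩
    refine le_trans (key_v 𝒜 hu) (le_csSup hbddv ?_)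
    refine ⟨R ∩ C, (R ∩ C)ᶜ, disjoint_compl_right, Finset.union_compl _, ?_, ?_, hne, rfl⟩
    · rw [Finset.mem_compl]
      intro h
      have := hlt _ h
      simp at this
    · rw [Finset.mem_compl]
      intro h
      have := hlt _ h
      simp at this

end
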